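/- If P is a symmetric positive definite matrix, K_f a matrix, Q and R positive definite, and (A+BK_f)ᵀ P (A+BK_f) + Q + K_fᵀ R K_f = P, then the spectral radius of A+BK_f is strictly less than 1 (i.e., A+BK_f is Schur stable). -/

import Mathlib

open Matrix

/-- A real square matrix is Schur stable if all of its complex eigenvalues
(roots of its characteristic polynomial over `ℂ`) have modulus `< 1`. -/
def SchurStable {n : ℕ} (M : Matrix (Fin n) (Fin n) ℝ) : Prop :=
  ∀ μ : ℂ, (M.map (Complex.ofReal)).charpoly.IsRoot μ → ‖μ‖ < 1

/-- Real part of the complexified quadratic form splits as the sum of two real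
quadratic forms. -/
lemma re_quad_eq {n : ℕ} (N : Matrix (Fin n) (Fin n) ℝ) (v : Fin n → ℂ) :
    (star v ⬝ᵥ (N.map Complex.ofReal).mulVec v).re =
      (fun i => (v i).re) ⬝ᵥ N.mulVec (fun i => (v i).re)
      + (fun i => (v i).im) ⬝ᵥ N.mulVec (fun i => (v i).im) := by
  simp only [dotProduct, mulVec, Pi.star_apply, Matrix.map_apply, dotProduct]
  rw [Complex.re_sum, ← Finset.sum_add_distrib]
  refine Finset.sum_congr rfl fun i _ => ?_
  rw [Finset.mul_sum, Complex.re_sum, Finset.mul_sum, Finset.mul_sum,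
    ← Finset.sum_add_distrib]
  refine Finset.sum_congr rfl fun j _ => ?_
  simp [Complex.mul_re, Complex.mul_im]

/-- A root of the complexified characteristic polynomial admits an eigenvector. -/
lemma exists_eigenvector_of_isRoot {n : ℕ} (M : Matrix (Fin n) (Fin n) ℝ) (μ : ℂ)
    (h : (M.map (Complex.ofReal)).charpoly.IsRoot μ) :
    ∃ v : Fin n → ℂ, v ≠ 0 ∧ (M.map Complex.ofReal).mulVec v = μ • v := by
  set Mc := M.map (Complex.ofReal)
  have hdet : (μ • (1 : Matrix (Fin n) (Fin n) ℂ) - Mc).det = 0 := by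
    have : Polynomial.eval μ Mc.charpoly = 0 := h
    rw [Matrix.charpoly, ← Polynomial.coe_evalRingHom, RingHom.map_det] at this
    convert this using 2
    ext i j
    by_cases hij : i = j <;>
      simp [charmatrix_apply, Matrix.diagonal_apply, hij, Matrix.one_apply,
        Matrix.smul_apply]
  obtain ⟨v, hv0, hv⟩ := (Matrix.exists_mulVec_eq_zero_iff).mpr hdet
  refine ⟨v, hv0, ?_⟩
  have := hv
  rw [Matrix.sub_mulVec, sub_eq_zero] at this
  have h1 : (μ • (1 : Matrix (Fin n) (Fin n) ℂ)).mulVec v = μ • v := by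
    simp [Matrix.smul_mulVec]
  rw [h1] at this
  exact this.symm

/-- If `P` is symmetric positive definite, `Q`, `R` are positive definite, and
`(A+BK_f)ᵀ P (A+BK_f) + Q + K_fᵀ R K_f = P`, then `A + B K_f` is Schur stable. -/
theorem riccati_implies_schur_stable
    (n m : ℕ)
    (A : Matrix (Fin n) (Fin n) ℝ) (B : Matrix (Fin n) (Fin m) ℝ)
    (Q P : Matrix (Fin n) (Fin n) ℝ) (R : Matrix (Fin m) (Fin m) ℝ)
    (Kf : Matrix (Fin m) (Fin n) ℝ)
    (hQ : Q.PosDef) (hR : R.PosDef) (hP : P.PosDef) (hPsymm : P.IsSymm)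
    (hric : (A + B * Kf)ᵀ * P * (A + B * Kf) + Q + Kfᵀ * R * Kf = P) :
    SchurStable (A + B * Kf) := by
  intro μ hroot
  set M := A + B * Kf with hM
  obtain ⟨v, hv0, hev⟩ := exists_eigenvector_of_isRoot M μ hroot
  set a : Fin n → ℝ := fun i => (v i).re with ha
  set b : Fin n → ℝ := fun i => (v i).im with hb
  -- real quadratic form values
  set pP : ℝ := a ⬝ᵥ P.mulVec a + b ⬝ᵥ P.mulVec b with hpP
  set pQ : ℝ := a ⬝ᵥ Q.mulVec a + b ⬝ᵥ Q.mulVec b with hpQ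
  set pR : ℝ := a ⬝ᵥ (Kfᵀ * R * Kf).mulVec a + b ⬝ᵥ (Kfᵀ * R * Kf).mulVec b with hpR
  have hab : a ≠ 0 ∨ b ≠ 0 := by
    by_contra hc
    push_neg at hc
    apply hv0
    funext i
    have h1 : (v i).re = 0 := congrFun hc.1 i
    have h2 : (v i).im = 0 := congrFun hc.2 i
    exact Complex.ext h1 h2
  have hRK : (Kfᵀ * R * Kf).PosSemidef := by
    have := hR.posSemidef.conjTranspose_mul_mul_same Kf
    simpa using this
  have hpPpos : 0 < pP := by
    rcases hab with h | h
    · have : 0 < a ⬝ᵥ P.mulVec a := by simpa using hP.dotProduct_mulVec_pos h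
      have h2 : 0 ≤ b ⬝ᵥ P.mulVec b := by simpa using hP.posSemidef.dotProduct_mulVec_nonneg b
      rw [hpP]; positivity
    · have : 0 < b ⬝ᵥ P.mulVec b := by simpa using hP.dotProduct_mulVec_pos h
      have h2 : 0 ≤ a ⬝ᵥ P.mulVec a := by simpa using hP.posSemidef.dotProduct_mulVec_nonneg a
      rw [hpP]; positivity
  have hpQpos : 0 < pQ := by
    rcases hab with h | h
    · have : 0 < a ⬝ᵥ Q.mulVec a := by simpa using hQ.dotProduct_mulVec_pos h
      have h2 : 0 ≤ b ⬝ᵥ Q.mulVec b := by simpa using hQ.posSemidef.dotProduct_mulVec_nonneg b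
      rw [hpQ]; positivity
    · have : 0 < b ⬝ᵥ Q.mulVec b := by simpa using hQ.dotProduct_mulVec_pos h
      have h2 : 0 ≤ a ⬝ᵥ Q.mulVec a := by simpa using hQ.posSemidef.dotProduct_mulVec_nonneg a
      rw [hpQ]; positivity
  have hpRnn : 0 ≤ pR := by
    have h1 : 0 ≤ a ⬝ᵥ (Kfᵀ * R * Kf).mulVec a := by simpa using hRK.dotProduct_mulVec_nonneg a
    have h2 : 0 ≤ b ⬝ᵥ (Kfᵀ * R * Kf).mulVec b := by simpa using hRK.dotProduct_mulVec_nonneg b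
    rw [hpR]; positivity
  -- complexify the Riccati equation
  have hricC0 : (Mᵀ.map ⇑Complex.ofRealHom) * (P.map ⇑Complex.ofRealHom) *
      (M.map ⇑Complex.ofRealHom) + Q.map ⇑Complex.ofRealHom +
      ((Kfᵀ * R * Kf).map ⇑Complex.ofRealHom) = P.map ⇑Complex.ofRealHom := by
    have := congrArg (fun (X : Matrix (Fin n) (Fin n) ℝ) => X.map ⇑Complex.ofRealHom) hric
    simpa [Matrix.map_add, Matrix.map_mul, ← hM] using this
  have hricC : (Mᵀ.map Complex.ofReal) * (P.map Complex.ofReal) *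
      (M.map Complex.ofReal) + Q.map Complex.ofReal +
      ((Kfᵀ * R * Kf).map Complex.ofReal) = P.map Complex.ofReal := hricC0
  -- quadratic forms over ℂ
  have hquad := congrArg (fun (X : Matrix (Fin n) (Fin n) ℂ) =>
      (star v ⬝ᵥ X.mulVec v).re) hricC
  -- first term: |μ|^2 * pP
  have hterm1 : (star v ⬝ᵥ ((Mᵀ.map Complex.ofReal) * (P.map Complex.ofReal) *
      (M.map Complex.ofReal)).mulVec v).re = Complex.normSq μ * pP := by
    have hct : (Mᵀ.map Complex.ofReal) = (M.map Complex.ofReal)ᴴ := by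
      ext i j
      simp [Matrix.conjTranspose_apply, Complex.conj_ofReal]
    have key : star v ⬝ᵥ ((Mᵀ.map Complex.ofReal) * (P.map Complex.ofReal) *
        (M.map Complex.ofReal)).mulVec v
        = star ((M.map Complex.ofReal).mulVec v) ⬝ᵥ
          (P.map Complex.ofReal).mulVec ((M.map Complex.ofReal).mulVec v) := by
      rw [hct, Matrix.mul_assoc, ← Matrix.mulVec_mulVec, ← Matrix.mulVec_mulVec,
        Matrix.star_mulVec, ← Matrix.dotProduct_mulVec]
    rw [key, hev]
    have hsc : star (μ • v) ⬝ᵥ (P.map Complex.ofReal).mulVec (μ • v)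
        = (starRingEnd ℂ μ * μ) * (star v ⬝ᵥ (P.map Complex.ofReal).mulVec v) := by
      rw [star_smul, Matrix.mulVec_smul, smul_dotProduct, dotProduct_smul]
      simp [smul_smul]
      ring
    rw [hsc]
    have hnorm : starRingEnd ℂ μ * μ = (Complex.normSq μ : ℂ) := by
      rw [mul_comm, Complex.mul_conj]
    rw [hnorm, Complex.re_ofReal_mul, re_quad_eq]
  have hterm2 : (star v ⬝ᵥ (Q.map Complex.ofReal).mulVec v).re = pQ := re_quad_eq Q v
  have hterm3 : (star v ⬝ᵥ ((Kfᵀ * R * Kf).map Complex.ofReal).mulVec v).re = pR :=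
    re_quad_eq (Kfᵀ * R * Kf) v
  have hterm4 : (star v ⬝ᵥ (P.map Complex.ofReal).mulVec v).re = pP := re_quad_eq P v
  simp only [Matrix.add_mulVec, dotProduct_add, Complex.add_re] at hquad
  rw [hterm1, hterm2, hterm3, hterm4] at hquad
  -- hquad : normSq μ * pP + pQ + pR = pP
  have hns : Complex.normSq μ < 1 := by
    nlinarith [hpPpos, hpQpos, hpRnn]
  nlinarith [Complex.sq_norm μ, norm_nonneg μ, hns]
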